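/- Suppose additionally that γ̂ : D ∘ (i_! ∘ i^*)ᵒᵖ ≅ (i_* ∘ i^*) ∘ D is a natural isomorphism such that α_{D(A)} = γ̂_A ∘ D(β_A) for every object A of C. Define δ̂_A := D(σ_A) ∘ ε_{i_!(i^*(A))} ∘ φ(γ̂_A⁻¹) ∘ τ_{D(A)}⁻¹ : ψ(D(A)) → D(ψ(A)). Then each δ̂_A is an isomorphism and, for every object A of C, δ̂_A ∘ var_{D(A)} = D(can_A) ∘ ε_A, as morphisms φ(D(A)) → D(ψ(A)). (That is, replacing δ by the isomorphism δ̂ makes the variation-versus-dual-canonical square commute.) -/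
import Mathlib


open CategoryTheory Opposite

universe v v' u u'

variable {C : Type u} [Category.{v} C] {C' : Type u'} [Category.{v'} C']

/-- The morphism `σ_A := can_{i_!(i^*(A))} ∘ π_A : ψ(A) ⟶ φ(i_!(i^*(A)))`,
where `π_A = (ψ(β_A))⁻¹`. -/
noncomputable def sigmaMap (istar : C ⥤ C') (ishriek : C' ⥤ C)
    (adjS : ishriek ⊣ istar) (ψ φ : C ⥤ C) (can : ψ ⟶ φ)
    [∀ A : C, IsIso (ψ.map (adjS.counit.app A))] (A : C) :
    ψ.obj A ⟶ φ.obj (ishriek.obj (istar.obj A)) :=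
  inv (ψ.map (adjS.counit.app A)) ≫ can.app (ishriek.obj (istar.obj A))

/-- The morphism `τ_A := ρ_A ∘ var_{i_*(i^*(A))} : φ(i_*(i^*(A))) ⟶ ψ(A)`,
where `ρ_A = (ψ(α_A))⁻¹`. -/
noncomputable def tauMap (istar : C ⥤ C') (ipush : C' ⥤ C)
    (adjP : istar ⊣ ipush) (ψ φ : C ⥤ C) (var : φ ⟶ ψ)
    [∀ A : C, IsIso (ψ.map (adjP.unit.app A))] (A : C) :
    φ.obj (ipush.obj (istar.obj A)) ⟶ ψ.obj A :=
  var.app (ipush.obj (istar.obj A)) ≫ inv (ψ.map (adjP.unit.app A))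

instance sigmaMap_isIso (istar : C ⥤ C') (ishriek : C' ⥤ C)
    (adjS : ishriek ⊣ istar) (ψ φ : C ⥤ C) (can : ψ ⟶ φ)
    [∀ A : C, IsIso (ψ.map (adjS.counit.app A))]
    [∀ A : C, IsIso (can.app (ishriek.obj (istar.obj A)))] (A : C) :
    IsIso (sigmaMap istar ishriek adjS ψ φ can A) := by
  unfold sigmaMap; infer_instance

instance tauMap_isIso (istar : C ⥤ C') (ipush : C' ⥤ C)
    (adjP : istar ⊣ ipush) (ψ φ : C ⥤ C) (var : φ ⟶ ψ)
    [∀ A : C, IsIso (ψ.map (adjP.unit.app A))]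
    [∀ A : C, IsIso (var.app (ipush.obj (istar.obj A)))] (A : C) :
    IsIso (tauMap istar ipush adjP ψ φ var A) := by
  unfold tauMap; infer_instance

/-- The morphism `δ_A := 𝒟(τ_A⁻¹) ∘ ε_{i_*(i^*(A))} ∘ φ(γ_A⁻¹) ∘ σ_{𝒟(A)} :
ψ(𝒟(A)) ⟶ 𝒟(ψ(A))`. -/
noncomputable def deltaMap (istar : C ⥤ C') (ishriek ipush : C' ⥤ C)
    (adjS : ishriek ⊣ istar) (adjP : istar ⊣ ipush)
    (D : Cᵒᵖ ⥤ C) (ψ φ : C ⥤ C) (can : ψ ⟶ φ) (var : φ ⟶ ψ)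
    [∀ A : C, IsIso (ψ.map (adjP.unit.app A))]
    [∀ A : C, IsIso (ψ.map (adjS.counit.app A))]
    [∀ A : C, IsIso (can.app (ishriek.obj (istar.obj A)))]
    [∀ A : C, IsIso (var.app (ipush.obj (istar.obj A)))]
    (ε : D ⋙ φ ≅ φ.op ⋙ D)
    (γ : (istar ⋙ ipush).op ⋙ D ≅ D ⋙ istar ⋙ ishriek) (A : C) :
    ψ.obj (D.obj (op A)) ⟶ D.obj (op (ψ.obj A)) :=
  sigmaMap istar ishriek adjS ψ φ can (D.obj (op A)) ≫
    φ.map (γ.inv.app (op A)) ≫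
      ε.hom.app (op (ipush.obj (istar.obj A))) ≫
        D.map (inv (tauMap istar ipush adjP ψ φ var A)).op

instance deltaMap_isIso (istar : C ⥤ C') (ishriek ipush : C' ⥤ C)
    (adjS : ishriek ⊣ istar) (adjP : istar ⊣ ipush)
    (D : Cᵒᵖ ⥤ C) (ψ φ : C ⥤ C) (can : ψ ⟶ φ) (var : φ ⟶ ψ)
    [∀ A : C, IsIso (ψ.map (adjP.unit.app A))]
    [∀ A : C, IsIso (ψ.map (adjS.counit.app A))]
    [∀ A : C, IsIso (can.app (ishriek.obj (istar.obj A)))]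
    [∀ A : C, IsIso (var.app (ipush.obj (istar.obj A)))]
    (ε : D ⋙ φ ≅ φ.op ⋙ D)
    (γ : (istar ⋙ ipush).op ⋙ D ≅ D ⋙ istar ⋙ ishriek) (A : C) :
    IsIso (deltaMap istar ishriek ipush adjS adjP D ψ φ can var ε γ A) := by
  unfold deltaMap; infer_instance

/-- The morphism `δ̂_A := 𝒟(σ_A) ∘ ε_{i_!(i^*(A))} ∘ φ(γ̂_A⁻¹) ∘ τ_{𝒟(A)}⁻¹ :
ψ(𝒟(A)) ⟶ 𝒟(ψ(A))`. -/
noncomputable def deltaHatMap (istar : C ⥤ C') (ishriek ipush : C' ⥤ C)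
    (adjS : ishriek ⊣ istar) (adjP : istar ⊣ ipush)
    (D : Cᵒᵖ ⥤ C) (ψ φ : C ⥤ C) (can : ψ ⟶ φ) (var : φ ⟶ ψ)
    [∀ A : C, IsIso (ψ.map (adjP.unit.app A))]
    [∀ A : C, IsIso (ψ.map (adjS.counit.app A))]
    [∀ A : C, IsIso (can.app (ishriek.obj (istar.obj A)))]
    [∀ A : C, IsIso (var.app (ipush.obj (istar.obj A)))]
    (ε : D ⋙ φ ≅ φ.op ⋙ D)
    (γhat : (istar ⋙ ishriek).op ⋙ D ≅ D ⋙ istar ⋙ ipush) (A : C) :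
    ψ.obj (D.obj (op A)) ⟶ D.obj (op (ψ.obj A)) :=
  inv (tauMap istar ipush adjP ψ φ var (D.obj (op A))) ≫
    φ.map (γhat.inv.app (op A)) ≫
      ε.hom.app (op (ishriek.obj (istar.obj A))) ≫
        D.map (sigmaMap istar ishriek adjS ψ φ can A).op

/-- given `γ̂` with `α_{𝒟(A)} = γ̂_A ∘ 𝒟(β_A)`, each
`δ̂_A := 𝒟(σ_A) ∘ ε_{i_!(i^*(A))} ∘ φ(γ̂_A⁻¹) ∘ τ_{𝒟(A)}⁻¹` is an isomorphism and
`δ̂_A ∘ var_{𝒟(A)} = 𝒟(can_A) ∘ ε_A` as morphisms `φ(𝒟(A)) ⟶ 𝒟(ψ(A))`. -/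
theorem var_dual_eq_dual_can (istar : C ⥤ C') (ishriek ipush : C' ⥤ C)
    (adjS : ishriek ⊣ istar) (adjP : istar ⊣ ipush)
    (D : Cᵒᵖ ⥤ C) [D.IsEquivalence] (ψ φ : C ⥤ C) (can : ψ ⟶ φ) (var : φ ⟶ ψ)
    [∀ A : C, IsIso (ψ.map (adjP.unit.app A))]
    [∀ A : C, IsIso (ψ.map (adjS.counit.app A))]
    [∀ A : C, IsIso (can.app (ishriek.obj (istar.obj A)))]
    [∀ A : C, IsIso (var.app (ipush.obj (istar.obj A)))]
    (ε : D ⋙ φ ≅ φ.op ⋙ D)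
    (γhat : (istar ⋙ ishriek).op ⋙ D ≅ D ⋙ istar ⋙ ipush)
    (hγhat : ∀ A : C, adjP.unit.app (D.obj (op A)) =
      D.map (adjS.counit.app A).op ≫ γhat.hom.app (op A)) :
    ∀ A : C,
      IsIso (deltaHatMap istar ishriek ipush adjS adjP D ψ φ can var ε γhat A) ∧
      var.app (D.obj (op A)) ≫
          deltaHatMap istar ishriek ipush adjS adjP D ψ φ can var ε γhat A =
        ε.hom.app (op A) ≫ D.map (can.app A).op := by
  intro A
  constructor
  · unfold deltaHatMap; infer_instance
  · have hσ : sigmaMap istar ishriek adjS ψ φ can A ≫ φ.map (adjS.counit.app A) =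
        can.app A := by
      unfold sigmaMap
      rw [Category.assoc, ← can.naturality, ← Category.assoc, IsIso.inv_hom_id,
        Category.id_comp]
      rfl
    unfold deltaHatMap tauMap
    rw [IsIso.inv_comp, IsIso.inv_inv]
    slice_lhs 1 2 => rw [← var.naturality]
    slice_lhs 2 3 => rw [IsIso.hom_inv_id]
    rw [Category.id_comp, hγhat A, φ.map_comp]
    slice_lhs 2 3 => rw [← φ.map_comp, γhat.hom_inv_id_app]
    slice_lhs 1 2 => rw [← φ.map_comp]; erw [Category.comp_id]
    have hε := ε.hom.naturality (adjS.counit.app A).op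
    dsimp at hε
    slice_lhs 1 2 => rw [hε]
    rw [Category.assoc, ← D.map_comp, ← op_comp, hσ]
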